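/- Suppose f : Γ → ℝ satisfies: f is symmetric, homogeneous of degree one, f > 0 on Γ, fᵢ > 0 on Γ, and f is concave on Γ, where Γ is an open convex symmetric cone with Γₙ ⊆ Γ ⊆ Γ₁. Then there is a constant c₀ > 0 such that Σᵢ fᵢ(λ) ≥ c₀ for all λ ∈ Γ. One can take c₀ = f(e)/n where e = (1, ..., 1). -/

import Mathlib

/-- For f symmetric, degree-one homogeneous, positive, with positive partial derivatives
and concave on an open convex symmetric cone Γₙ ⊆ Γ ⊆ Γ₁, one has Σᵢ fᵢ(λ) ≥ c₀ > 0
for all λ ∈ Γ, with c₀ = f(e)/n, e = (1,…,1). -/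
theorem sum_fi_lower_bound (n : ℕ) (hn : 0 < n) (Γ : Set (EuclideanSpace ℝ (Fin n)))
    (f : EuclideanSpace ℝ (Fin n) → ℝ)
    (hopen : IsOpen Γ) (hconv : Convex ℝ Γ)
    (hcone : ∀ lam ∈ Γ, ∀ t : ℝ, 0 < t → t • lam ∈ Γ)
    (hperm : ∀ (σ : Equiv.Perm (Fin n)), ∀ lam ∈ Γ,
      (WithLp.toLp 2 (fun i => lam (σ i))) ∈ Γ ∧ f (WithLp.toLp 2 (fun i => lam (σ i))) = f lam)
    (hGn : {lam : EuclideanSpace ℝ (Fin n) | ∀ i, 0 < lam i} ⊆ Γ)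
    (hG1 : Γ ⊆ {lam : EuclideanSpace ℝ (Fin n) | 0 < ∑ i, lam i})
    (hC1 : ContDiffOn ℝ 1 f Γ)
    (hpos : ∀ lam ∈ Γ, 0 < f lam)
    (hhom : ∀ lam ∈ Γ, ∀ t : ℝ, 0 < t → f (t • lam) = t * f lam)
    (hderiv_pos : ∀ lam ∈ Γ, ∀ i, 0 < fderiv ℝ f lam (EuclideanSpace.single i 1))
    (hconc : ConcaveOn ℝ Γ f) :
    0 < f (WithLp.toLp 2 (fun _ => (1 : ℝ))) / n ∧
    ∀ lam ∈ Γ, f (WithLp.toLp 2 (fun _ => (1 : ℝ))) / n ≤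
      ∑ i, fderiv ℝ f lam (EuclideanSpace.single i 1) := by
  set e : EuclideanSpace ℝ (Fin n) := (WithLp.toLp 2 (fun _ => (1 : ℝ))) with he_def
  have he : e ∈ Γ := hGn (fun i => one_pos)
  have hfe : 0 < f e := hpos e he
  constructor
  · positivity
  intro lam hlam
  -- f is differentiable at lam
  have hdiff : DifferentiableAt ℝ f lam :=
    (hC1.differentiableOn one_ne_zero).differentiableAt (hopen.mem_nhds hlam)
  set D := fderiv ℝ f lam with hD
  -- Euler identity: D lam = f lam
  have euler : D lam = f lam := by
    have h1 : HasDerivAt (fun t : ℝ => f (t • lam)) (D lam) 1 := by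
      have hA : HasDerivAt (fun t : ℝ => t • lam) lam 1 := by
        simpa using (hasDerivAt_id (1 : ℝ)).smul_const lam
      have hF : HasFDerivAt f D ((1:ℝ) • lam) := by simpa using hdiff.hasFDerivAt
      exact hF.comp_hasDerivAt 1 hA
    have h2 : HasDerivAt (fun t : ℝ => f (t • lam)) (f lam) 1 := by
      have heq : (fun t : ℝ => f (t • lam)) =ᶠ[nhds 1] fun t => t * f lam := by
        filter_upwards [IsOpen.mem_nhds isOpen_Ioi (by norm_num : (1:ℝ) ∈ Set.Ioi (0:ℝ))]
          with t ht
        exact hhom lam hlam t ht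
      exact HasDerivAt.congr_of_eventuallyEq
        (by simpa using (hasDerivAt_id (1 : ℝ)).mul_const (f lam)) heq
    exact h1.unique h2
  -- tangent line inequality: f e ≤ D e
  have tangent : f e ≤ D e := by
    set v := e - lam with hv
    set g : ℝ → ℝ := fun t => f (lam + t • v) with hg
    have hgconc : ConcaveOn ℝ ((fun t : ℝ => lam + t • v) ⁻¹' Γ) g := by
      let A : ℝ →ᵃ[ℝ] EuclideanSpace ℝ (Fin n) :=
        { toFun := fun t => lam + t • v
          linear := LinearMap.toSpanSingleton ℝ _ v
          map_vadd' := by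
            intro p q
            simp [LinearMap.toSpanSingleton, add_smul, vadd_eq_add]
            module }
      exact hconc.comp_affineMap A
    have h0 : (0 : ℝ) ∈ (fun t : ℝ => lam + t • v) ⁻¹' Γ := by
      simpa using hlam
    have h1m : (1 : ℝ) ∈ (fun t : ℝ => lam + t • v) ⁻¹' Γ := by
      simp only [Set.mem_preimage, one_smul, hv]
      simpa using he
    have hgd : HasDerivAt g (D v) 0 := by
      have hA : HasDerivAt (fun t : ℝ => lam + t • v) v 0 := by
        simpa using ((hasDerivAt_id (0 : ℝ)).smul_const v).const_add lam
      have hF : HasFDerivAt f D (lam + (0:ℝ) • v) := by simpa using hdiff.hasFDerivAt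
      exact hF.comp_hasDerivAt 0 hA
    have hslope := hgconc.slope_le_of_hasDerivAt h0 h1m one_pos hgd
    have hg0 : g 0 = f lam := by simp [hg]
    have hg1 : g 1 = f e := by simp [hg, hv]
    rw [slope_def_field] at hslope
    have : f e - f lam ≤ D v := by
      simpa [hg0, hg1] using hslope
    have hDv : D v = D e - D lam := by rw [hv, map_sub]
    rw [hDv, euler] at this
    linarith
  -- sum of partials equals D e
  have hsum : ∑ i, D (EuclideanSpace.single i 1) = D e := by
    rw [← map_sum]
    congr 1
    ext j
    have : (∑ x : Fin n, EuclideanSpace.single x (1:ℝ)) j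
        = ∑ x : Fin n, EuclideanSpace.single x (1:ℝ) j :=
      by rw [WithLp.ofLp_sum]; exact Finset.sum_apply j Finset.univ _
    simp [this, EuclideanSpace.single_apply, he_def]
  rw [hsum]
  calc f e / n ≤ f e := by
        apply div_le_self hfe.le
        exact_mod_cast hn
    _ ≤ D e := tangent
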